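/- arXiv:1904.07273 — 4 statements merged into one kernel-verified Lean document; each statement's English description precedes it below -/
import Mathlib

section
/- (Lemma 1) Let W_A and W_1, …, W_l be subspaces of V. Partition the index set {1,…,l} into disjoint groups R_1, …, R_t each of size r together with a remainder set R' of size strictly less than r. Assume: (L3) for all disjoint subsets B_1, B_2 ⊆ {1,…,l}, I(W_A ; W_{B_1} | W_{B_2}) = I(W_A ; W_{B_1}); and (L2) I(W_A ; W_{R'}) = 0. Then dim(W_A ⊓ Σ_{i=1}^l W_i) computed as mutual information decomposes group-wise: I(W_A ; W_{{1,…,l}}) = Σ_{j=1}^t I(W_A ; W_{R_j}). -/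
/-- Mutual information of two subspaces: `I(A;B) = dim A + dim B − dim(A+B)`. -/
noncomputable def mi (F : Type*) {V : Type*} [Field F] [AddCommGroup V] [Module F V]
    (A B : Submodule F V) : ℤ :=
  (Module.finrank F A : ℤ) + Module.finrank F B - Module.finrank F (A ⊔ B : Submodule F V)

/-- Conditional mutual information of subspaces:
`I(A;B|C) = dim(A+C) + dim(B+C) − dim(A+B+C) − dim C`. -/
noncomputable def cmi (F : Type*) {V : Type*} [Field F] [AddCommGroup V] [Module F V]
    (A B C : Submodule F V) : ℤ :=
  (Module.finrank F (A ⊔ C : Submodule F V) : ℤ) + Module.finrank F (B ⊔ C : Submodule F V)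
    - Module.finrank F (A ⊔ B ⊔ C : Submodule F V) - Module.finrank F C

lemma mi_chain (F : Type*) {V : Type*} [Field F] [AddCommGroup V] [Module F V]
    (A B C : Submodule F V) : mi F A (B ⊔ C) = mi F A C + cmi F A B C := by
  simp only [mi, cmi]
  rw [← sup_assoc]
  ring

/-- Lemma 1: Under (L3) and (L2), the mutual information of a
node subspace with the sum of `l` other node subspaces decomposes group-wise
over a partition into groups of size `r` plus a remainder of size `< r`:
`I(W_A ; W_{{1,…,l}}) = Σ_{j=1}^t I(W_A ; W_{R_j})`. -/
theorem lemma1_groupwise_decomposition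
    (F V : Type*) [Field F] [AddCommGroup V] [Module F V] [FiniteDimensional F V]
    (l t r : ℕ) (WA : Submodule F V) (W : Fin l → Submodule F V)
    (R : Fin t → Finset (Fin l)) (R' : Finset (Fin l))
    (hcard : ∀ j : Fin t, (R j).card = r) (hcard' : R'.card < r)
    (hdisj : ∀ j j' : Fin t, j ≠ j' → Disjoint (R j) (R j'))
    (hdisj' : ∀ j : Fin t, Disjoint (R j) R')
    (hcover : Finset.univ.biUnion R ∪ R' = (Finset.univ : Finset (Fin l)))
    (hL3 : ∀ B₁ B₂ : Finset (Fin l), Disjoint B₁ B₂ →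
      cmi F WA (B₁.sup W) (B₂.sup W) = mi F WA (B₁.sup W))
    (hL2 : mi F WA (R'.sup W) = 0) :
    mi F WA ((Finset.univ : Finset (Fin l)).sup W)
      = ∑ j : Fin t, mi F WA ((R j).sup W) := by
  have key : ∀ s : Finset (Fin t),
      mi F WA ((s.biUnion R ∪ R').sup W) = ∑ j ∈ s, mi F WA ((R j).sup W) := by
    intro s
    induction s using Finset.induction_on with
    | empty => simpa using hL2
    | @insert j s hj ih =>
      have hset : (insert j s).biUnion R ∪ R' = R j ∪ (s.biUnion R ∪ R') := by
        rw [Finset.biUnion_insert]; ac_rfl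
      have hd : Disjoint (R j) (s.biUnion R ∪ R') := by
        rw [Finset.disjoint_union_right]
        refine ⟨(Finset.disjoint_biUnion_right _ _ _).mpr ?_, hdisj' j⟩
        intro j' hj'
        exact hdisj j j' (fun h => hj (h ▸ hj'))
      rw [hset, Finset.sup_union, mi_chain, hL3 _ _ hd, ih, Finset.sum_insert hj]
      ring
  have h := key Finset.univ
  rw [hcover] at h
  rw [h]
end

section
/- (Theorem 2, abstract form) Let r, d, k be positive integers with r dividing k and k ≤ d, and let W_1, …, W_k be subspaces of V with dim W_i = d for every i. Assume: (L2) for every i and every S ⊆ {1,…,k}\{i} with |S| ≤ r−1, I(W_i ; W_S) = 0; (L3) for every i and all disjoint subsets B_1, B_2 ⊆ {1,…,k}\{i}, I(W_i ; W_{B_1} | W_{B_2}) = I(W_i ; W_{B_1}); (L4) for every i and every S ⊆ {1,…,k}\{i} with |S| = r, I(W_i ; W_S) ≤ r. Then 2 · dim(Σ_{i=1}^k W_i) ≥ k(2d − k + r). -/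
/-- Theorem 2, abstract form: Under properties (L2), (L3), (L4)
for `k` node subspaces each of dimension `d` (with `r ∣ k`, `k ≤ d`),
`2 · dim(Σ_{i=1}^k W_i) ≥ k(2d − k + r)`. -/
theorem theorem2_mbr_reconstruction_bound
    (F V : Type*) [Field F] [AddCommGroup V] [Module F V] [FiniteDimensional F V]
    (r d k : ℕ) (hr : 0 < r) (hd : 0 < d) (hk : 0 < k)
    (hrk : r ∣ k) (hkd : k ≤ d)
    (W : Fin k → Submodule F V)
    (hdim : ∀ i : Fin k, Module.finrank F (W i) = d)
    (hL2 : ∀ (i : Fin k) (S : Finset (Fin k)), i ∉ S → S.card ≤ r - 1 →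
      mi F (W i) (S.sup W) = 0)
    (hL3 : ∀ (i : Fin k) (B₁ B₂ : Finset (Fin k)), i ∉ B₁ → i ∉ B₂ → Disjoint B₁ B₂ →
      cmi F (W i) (B₁.sup W) (B₂.sup W) = mi F (W i) (B₁.sup W))
    (hL4 : ∀ (i : Fin k) (S : Finset (Fin k)), i ∉ S → S.card = r →
      mi F (W i) (S.sup W) ≤ (r : ℤ)) :
    2 * (Module.finrank F ((Finset.univ : Finset (Fin k)).sup W : Submodule F V) : ℤ)
      ≥ (k : ℤ) * (2 * d - k + r) := by
  classical
  -- Chain rule identity for mi/cmi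
  have mi_chain : ∀ A B C : Submodule F V, mi F A (B ⊔ C) = mi F A C + cmi F A B C := by
    intro A B C
    have h : Module.finrank F (A ⊔ (B ⊔ C) : Submodule F V)
        = Module.finrank F (A ⊔ B ⊔ C : Submodule F V) := by rw [sup_assoc]
    simp only [mi, cmi, h]; ring
  have chain : ∀ (i : Fin k) (B₁ B₂ : Finset (Fin k)), i ∉ B₁ → i ∉ B₂ → Disjoint B₁ B₂ →
      mi F (W i) ((B₁ ∪ B₂).sup W) = mi F (W i) (B₁.sup W) + mi F (W i) (B₂.sup W) := by
    intro i B₁ B₂ h1 h2 hdis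
    rw [Finset.sup_union, mi_chain, hL3 i B₁ B₂ h1 h2 hdis, add_comm]
  -- main bound: I(W i; W_S) ≤ r * ⌊|S|/r⌋
  have bound : ∀ s : ℕ, ∀ (i : Fin k) (S : Finset (Fin k)), i ∉ S → S.card = s →
      mi F (W i) (S.sup W) ≤ (r : ℤ) * ((s / r : ℕ) : ℤ) := by
    intro s
    induction s using Nat.strong_induction_on with
    | _ s ih =>
      intro i S hiS hcard
      by_cases hs : s < r
      · have h0 : S.card ≤ r - 1 := by omega
        rw [hL2 i S hiS h0]
        positivity
      · push_neg at hs
        obtain ⟨T, hTS, hT⟩ := Finset.exists_subset_card_eq (show r ≤ S.card by omega)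
        have hSsplit : T ∪ S \ T = S := Finset.union_sdiff_of_subset hTS
        have hiT : i ∉ T := fun h => hiS (hTS h)
        have hiST : i ∉ S \ T := fun h => hiS (Finset.mem_sdiff.mp h).1
        have hcardST : (S \ T).card = s - r := by
          rw [Finset.card_sdiff_of_subset hTS, hT, hcard]
        have hlt : s - r < s := by omega
        have h1 := hL4 i T hiT hT
        have h2 := ih (s - r) hlt i (S \ T) hiST hcardST
        have h3 := chain i T (S \ T) hiT hiST Finset.disjoint_sdiff
        rw [hSsplit] at h3
        have hdiv : s / r = (s - r) / r + 1 := Nat.div_eq_sub_div hr hs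
        rw [h3, hdiv, Nat.cast_add, Nat.cast_one]
        linarith
  -- the prefix sets
  set P : ℕ → Finset (Fin k) := fun n => Finset.univ.filter (fun j => (j : ℕ) < n) with hP
  have P0 : P 0 = ∅ := by ext j; simp [hP]
  have nmem : ∀ n (hn : n < k), (⟨n, hn⟩ : Fin k) ∉ P n := by
    intro n hn; simp [hP]
  have Pstep : ∀ n (hn : n < k), P (n + 1) = insert ⟨n, hn⟩ (P n) := by
    intro n hn; ext j
    simp only [hP, Finset.mem_filter, Finset.mem_univ, true_and, Finset.mem_insert,
      Fin.ext_iff]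
    omega
  have cardP : ∀ n, n ≤ k → (P n).card = n := by
    intro n
    induction n with
    | zero => intro _; simp [P0]
    | succ m ih2 =>
      intro h
      rw [Pstep m (by omega), Finset.card_insert_of_notMem (nmem m (by omega)),
        ih2 (by omega)]
  -- key induction
  have key : ∀ n, n ≤ k →
      (n : ℤ) * (2 * d) - 2 * r * (∑ j ∈ Finset.range n, ((j / r : ℕ) : ℤ))
        ≤ 2 * (Module.finrank F ((P n).sup W : Submodule F V) : ℤ) := by
    intro n
    induction n with
    | zero => simp [P0]
    | succ m ih2 =>
      intro h
      have hm : m < k := by omega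
      have hrec := ih2 (by omega)
      rw [Pstep m hm, Finset.sup_insert]
      have hmi := bound m ⟨m, hm⟩ (P m) (nmem m hm) (cardP m (by omega))
      have hrk2 : (Module.finrank F (W ⟨m, hm⟩ ⊔ (P m).sup W : Submodule F V) : ℤ)
          = (d : ℤ) + (Module.finrank F ((P m).sup W : Submodule F V) : ℤ)
            - mi F (W ⟨m, hm⟩) ((P m).sup W) := by
        simp only [mi, hdim]; ring
      rw [Finset.sum_range_succ, hrk2, Nat.cast_add, Nat.cast_one]
      linarith
  have Pk : P k = Finset.univ := by
    ext j; simp [hP, j.isLt]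
  have hkey := key k le_rfl
  rw [Pk] at hkey
  -- arithmetic: sum of floors
  obtain ⟨m, hm⟩ := hrk
  have hm1 : 1 ≤ m := by
    rcases Nat.eq_zero_or_pos m with h | h
    · subst h; simp at hm; omega
    · exact h
  have hmr : k = m * r := hm.trans (Nat.mul_comm r m)
  have sum_eq : ∀ M : ℕ, 2 * ∑ j ∈ Finset.range (M * r), (j / r) = r * (M * (M - 1)) := by
    intro M
    induction M with
    | zero => simp
    | succ N ihN =>
      have : (N + 1) * r = N * r + r := by ring
      rw [this, Finset.sum_range_add]
      have hconst : ∀ x ∈ Finset.range r, (N * r + x) / r = N := by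
        intro x hx
        rw [Finset.mem_range] at hx
        apply Nat.div_eq_of_lt_le
        · exact Nat.le_add_right _ _
        · calc N * r + x < N * r + r := by omega
            _ = (N + 1) * r := by ring
      rw [Finset.sum_congr rfl hconst, Finset.sum_const, Finset.card_range, smul_eq_mul]
      have hNN : (N + 1) * (N + 1 - 1) = N * (N - 1) + 2 * N := by
        cases N with
        | zero => simp
        | succ p => simp only [Nat.succ_sub_one]; ring
      have expand : r * (N * (N - 1) + 2 * N) = r * (N * (N - 1)) + 2 * (r * N) := by ring
      rw [hNN, expand, ← ihN]
      ring
  have hsum := sum_eq m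
  rw [← hmr] at hsum
  -- cast the sum identity to ℤ
  have hc : (∑ j ∈ Finset.range k, ((j / r : ℕ) : ℤ))
      = ((∑ j ∈ Finset.range k, j / r : ℕ) : ℤ) := (Nat.cast_sum _ _).symm
  have hsumZ : 2 * ((∑ j ∈ Finset.range k, j / r : ℕ) : ℤ)
      = (r : ℤ) * ((m : ℤ) * ((m : ℤ) - 1)) := by
    have h1 := congrArg (fun x : ℕ => (x : ℤ)) hsum
    simp only [Nat.cast_mul, Nat.cast_ofNat] at h1
    rw [h1, Nat.cast_sub hm1]
    push_cast
    ring
  have hkZ : (k : ℤ) = (m : ℤ) * r := by exact_mod_cast hmr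
  rw [hc] at hkey
  rw [ge_iff_le]
  have goal_eq : (k : ℤ) * (2 * d - k + r)
      = (k : ℤ) * (2 * d) - 2 * r * ((∑ j ∈ Finset.range k, j / r : ℕ) : ℤ) := by
    rw [hkZ]
    linear_combination (r : ℤ) * hsumZ
  rw [goal_eq]
  exact hkey
end

section
/- (Reconstructability at the MBR point, abstract form) Let r, d, k be positive integers with r dividing k and k ≤ d, and let W_1, …, W_k be subspaces of V with dim W_i = d for every i, satisfying: (L2) for every i and every S ⊆ {1,…,k}\{i} with |S| ≤ r−1, I(W_i ; W_S) = 0; (L3) for every i and all disjoint subsets B_1, B_2 ⊆ {1,…,k}\{i}, I(W_i ; W_{B_1} | W_{B_2}) = I(W_i ; W_{B_1}); (L4) for every i and every S ⊆ {1,…,k}\{i} with |S| = r, I(W_i ; W_S) ≤ r. If moreover 2 · dim V = k(2d − k + r), then the k subspaces span the whole space: Σ_{i=1}^k W_i = V. -/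
/-- Reconstructability at the MBR point, abstract form: under
(L2), (L3), (L4), if moreover `2 · dim V = k(2d − k + r)`, then the `k` node
subspaces span the whole space. -/
theorem mbr_reconstructability
    (F V : Type*) [Field F] [AddCommGroup V] [Module F V] [FiniteDimensional F V]
    (r d k : ℕ) (hr : 0 < r) (hd : 0 < d) (hk : 0 < k)
    (hrk : r ∣ k) (hkd : k ≤ d)
    (W : Fin k → Submodule F V)
    (hdim : ∀ i : Fin k, Module.finrank F (W i) = d)
    (hL2 : ∀ (i : Fin k) (S : Finset (Fin k)), i ∉ S → S.card ≤ r - 1 →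
      mi F (W i) (S.sup W) = 0)
    (hL3 : ∀ (i : Fin k) (B₁ B₂ : Finset (Fin k)), i ∉ B₁ → i ∉ B₂ → Disjoint B₁ B₂ →
      cmi F (W i) (B₁.sup W) (B₂.sup W) = mi F (W i) (B₁.sup W))
    (hL4 : ∀ (i : Fin k) (S : Finset (Fin k)), i ∉ S → S.card = r →
      mi F (W i) (S.sup W) ≤ (r : ℤ))
    (hV : 2 * (Module.finrank F V : ℤ) = (k : ℤ) * (2 * d - k + r)) :
    (Finset.univ : Finset (Fin k)).sup W = ⊤ := by
  have hrlek : r ≤ k := Nat.le_of_dvd hk hrk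
  set b : ℤ := if r = 1 then 1 else 0 with hb
  -- chain rule
  have hchain : ∀ (A B C : Submodule F V), mi F A (B ⊔ C) = mi F A C + cmi F A B C := by
    intro A B C
    simp only [mi, cmi]
    rw [sup_assoc]
    ring
  -- singleton bound
  have hsingle : ∀ i j : Fin k, i ≠ j → mi F (W i) (W j) ≤ b := by
    intro i j hij
    rcases eq_or_ne r 1 with h1 | h1
    · have h := hL4 i {j} (by simp [hij]) (by simp [h1])
      simpa [hb, h1, Finset.sup_singleton] using h
    · have h := hL2 i {j} (by simp [hij]) (by rw [Finset.card_singleton]; omega)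
      rw [Finset.sup_singleton] at h
      simp [hb, h1, h]
  -- bound on mutual information with a set
  have hmiS : ∀ (S : Finset (Fin k)) (i : Fin k), i ∉ S → mi F (W i) (S.sup W) ≤ b * S.card := by
    intro S
    induction S using Finset.induction_on with
    | empty =>
      intro i _
      simp only [mi, Finset.sup_empty, Finset.card_empty, Nat.cast_zero, mul_zero]
      have hmono : Module.finrank F ↥(W i) ≤ Module.finrank F ↥(W i ⊔ (⊥ : Submodule F V)) :=
        Submodule.finrank_mono le_sup_left
      have h0 : Module.finrank F (⊥ : Submodule F V) = 0 := finrank_bot F V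
      rw [Finset.sup_empty]
      omega
    | insert _ _ hjS =>
      rename_i j S ih
      intro i hi
      have hij : i ≠ j := by
        intro h; exact hi (h ▸ Finset.mem_insert_self j S)
      have hiS : i ∉ S := fun h => hi (Finset.mem_insert_of_mem h)
      rw [Finset.sup_insert, hchain]
      have hL3' := hL3 i {j} S (by simp [hij]) hiS (Finset.disjoint_singleton_left.mpr hjS)
      rw [Finset.sup_singleton] at hL3'
      rw [hL3']
      have h1 := ih i hiS
      have h2 := hsingle i j hij
      rw [Finset.card_insert_of_notMem hjS]
      have hbexp : b * ((S.card : ℤ) + 1) = b * S.card + b := by ring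
      push_cast
      linarith
  -- dimension lower bound
  have hdimT : ∀ T : Finset (Fin k),
      2 * (Module.finrank F ↥(T.sup W) : ℤ) ≥ 2 * d * T.card - b * (T.card * (T.card - 1)) := by
    intro T
    induction T using Finset.induction_on with
    | empty => simp
    | insert _ _ hjT =>
      rename_i j T ih
      rw [Finset.sup_insert, Finset.card_insert_of_notMem hjT]
      have hmi := hmiS T j hjT
      have key : (Module.finrank F ↥(W j ⊔ T.sup W : Submodule F V) : ℤ)
          = (d : ℤ) + Module.finrank F ↥(T.sup W) - mi F (W j) (T.sup W) := by
        simp only [mi, hdim j]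
        ring
      rw [key]
      push_cast
      nlinarith [hmi, ih]
  have htot := hdimT Finset.univ
  rw [Finset.card_univ, Fintype.card_fin] at htot
  have hle : Module.finrank F ↥((Finset.univ : Finset (Fin k)).sup W) ≤ Module.finrank F V :=
    Submodule.finrank_le _
  have hbk : b * ((k : ℤ) - 1) ≤ (k : ℤ) - r := by
    rcases eq_or_ne r 1 with h1 | h1
    · simp [hb, h1]
    · have : (r : ℤ) ≤ k := by exact_mod_cast hrlek
      simp [hb, h1]
      linarith
  have hk1 : (1 : ℤ) ≤ k := by exact_mod_cast hk
  have heq : Module.finrank F ↥((Finset.univ : Finset (Fin k)).sup W) = Module.finrank F V := by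
    have h2 : 2 * (Module.finrank F ↥((Finset.univ : Finset (Fin k)).sup W) : ℤ)
        ≥ 2 * (Module.finrank F V : ℤ) := by
      rw [hV]
      nlinarith [htot, hbk, hk1]
    have h3 : (Module.finrank F ↥((Finset.univ : Finset (Fin k)).sup W) : ℤ)
        ≤ Module.finrank F V := by exact_mod_cast hle
    omega
  exact Submodule.eq_top_of_finrank_eq heq
end

section
/- (Theorem 3, abstract form, interior point with d = n − r and per-node storage α = n − 2r) Let n, r, k be positive integers with r dividing k, k ≤ n − r and 2r ≤ n, and set α := n − 2r. Let W_1, …, W_k be subspaces of V with dim W_i = α for every i. Assume: (modified L2) for every i and every S ⊆ {1,…,k}\{i} with |S| ≤ 2r−1, I(W_i ; W_S) = 0; (modified L3) for every i and all pairwise disjoint subsets B_1, B_2, B_3 ⊆ {1,…,k}\{i} with |B_3| = r, I(W_i ; W_{B_1} | W_{B_2} + W_{B_3}) = I(W_i ; W_{B_1} | W_{B_3}); (modified L4) for every i and all disjoint subsets R, R' ⊆ {1,…,k}\{i} each of size r, I(W_i ; W_R | W_{R'}) ≤ r. Then 2 · dim(Σ_{i=1}^k W_i) ≥ k(2(n −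 2r) − (k − r)) + 2r(k − r). -/
section Aux
variable {F V : Type*} [Field F] [AddCommGroup V] [Module F V]

lemma mi_sup_eq (A B C : Submodule F V) :
    mi F A (B ⊔ C) = mi F A C + cmi F A B C := by
  unfold mi cmi
  have h1 : A ⊔ (B ⊔ C) = A ⊔ B ⊔ C := by ac_rfl
  rw [h1]; ring

lemma cmi_sup_right (A X Y C : Submodule F V) :
    cmi F A (X ⊔ Y) C = cmi F A X C + cmi F A Y (X ⊔ C) := by
  unfold cmi
  have h1 : A ⊔ (X ⊔ Y) ⊔ C = A ⊔ Y ⊔ (X ⊔ C) := by ac_rfl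
  have h2 : X ⊔ Y ⊔ C = Y ⊔ (X ⊔ C) := by ac_rfl
  have h3 : A ⊔ X ⊔ C = A ⊔ (X ⊔ C) := by ac_rfl
  rw [h1, h2, h3]; ring

lemma cmi_bot (A C : Submodule F V) : cmi F A ⊥ C = 0 := by
  unfold cmi
  rw [bot_sup_eq, sup_bot_eq]; ring

end Aux

/-- the interval `[a, b)` inside `Fin k` -/
def iv (k a b : ℕ) : Finset (Fin k) :=
  Finset.univ.filter (fun x => a ≤ x.val ∧ x.val < b)

lemma mem_iv {k a b : ℕ} {x : Fin k} : x ∈ iv k a b ↔ a ≤ x.val ∧ x.val < b := by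
  simp [iv]

lemma card_iv (k a b : ℕ) (hb : b ≤ k) : (iv k a b).card = b - a := by
  have h : iv k a b = (Finset.Ico a b).attachFin
      (fun m hm => lt_of_lt_of_le (Finset.mem_Ico.mp hm).2 hb) := by
    ext x; simp [mem_iv, Finset.mem_Ico]
  rw [h, Finset.card_attachFin, Nat.card_Ico]

lemma iv_union {k a b c : ℕ} (hab : a ≤ b) (hbc : b ≤ c) :
    iv k a b ∪ iv k b c = iv k a c := by
  ext x; simp only [Finset.mem_union, mem_iv]; omega

lemma iv_disjoint {k a b a' b' : ℕ} (h : b ≤ a') :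
    Disjoint (iv k a b) (iv k a' b') := by
  rw [Finset.disjoint_left]
  intro x hx hx'
  rw [mem_iv] at hx hx'
  omega

lemma not_mem_iv {k a b : ℕ} {i : Fin k} (h : b ≤ i.val ∨ i.val < a) : i ∉ iv k a b := by
  intro hx; rw [mem_iv] at hx; omega

/-- per-index bound value -/
noncomputable def cBound (r v : ℕ) : ℤ :=
  if v / r ≤ 1 then 0 else (r : ℤ) * ((v / r : ℕ) - 1)

section Key
variable {F V : Type*} [Field F] [AddCommGroup V] [Module F V] [FiniteDimensional F V]

lemma key_bound (r k : ℕ) (hr : 0 < r) (W : Fin k → Submodule F V)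
    (hL2 : ∀ (i : Fin k) (S : Finset (Fin k)), i ∉ S → S.card ≤ 2 * r - 1 →
      mi F (W i) (S.sup W) = 0)
    (hL3 : ∀ (i : Fin k) (B₁ B₂ B₃ : Finset (Fin k)), i ∉ B₁ → i ∉ B₂ → i ∉ B₃ →
      Disjoint B₁ B₂ → Disjoint B₁ B₃ → Disjoint B₂ B₃ → B₃.card = r →
      cmi F (W i) (B₁.sup W) (B₂.sup W ⊔ B₃.sup W)
        = cmi F (W i) (B₁.sup W) (B₃.sup W))
    (hL4 : ∀ (i : Fin k) (S S' : Finset (Fin k)), i ∉ S → i ∉ S' → Disjoint S S' →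
      S.card = r → S'.card = r → cmi F (W i) (S.sup W) (S'.sup W) ≤ (r : ℤ))
    (v : ℕ) (hv : v < k) :
    mi F (W ⟨v, hv⟩) ((iv k 0 v).sup W) ≤ cBound r v := by
  have hdm : r * (v / r) + v % r = v := Nat.div_add_mod v r
  have hml : v % r < r := Nat.mod_lt _ hr
  by_cases hj : v / r ≤ 1
  · rw [cBound, if_pos hj]
    have h1 : (⟨v, hv⟩ : Fin k) ∉ iv k 0 v := not_mem_iv (Or.inl le_rfl)
    have h2 : (iv k 0 v).card ≤ 2 * r - 1 := by
      rw [card_iv k 0 v hv.le]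
      have : r * (v / r) ≤ r * 1 := Nat.mul_le_mul_left r hj
      omega
    exact le_of_eq (hL2 _ _ h1 h2)
  · rw [cBound, if_neg hj]
    obtain ⟨j', hj'⟩ : ∃ j', v / r = j' + 2 := ⟨v / r - 2, by omega⟩
    obtain ⟨a1, ha1⟩ : ∃ a, (j' + 1) * r = a := ⟨_, rfl⟩
    obtain ⟨a2, ha2⟩ : ∃ a, (j' + 2) * r = a := ⟨_, rfl⟩
    have h21 : a2 = a1 + r := by rw [← ha1, ← ha2]; ring
    have h2v : a2 ≤ v ∧ v < a2 + r := by
      have hrv : r * (v / r) = (j' + 2) * r := by rw [hj']; ring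
      rw [ha2] at hrv
      omega
    set i : Fin k := ⟨v, hv⟩ with hidef
    have hival : i.val = v := rfl
    set R : Finset (Fin k) := iv k a1 a2 with hR
    have hcardR : R.card = r := by
      rw [hR, card_iv k _ _ (by omega)]; omega
    have hiR : i ∉ R := not_mem_iv (Or.inl (by omega))
    -- inner claim
    have claim : ∀ (m b : ℕ), b = m * r → b ≤ a1 →
        cmi F (W i) ((iv k 0 b).sup W) (R.sup W) ≤ (r : ℤ) * m := by
      intro m
      induction m with
      | zero =>
        intro b hb _
        have hb0 : b = 0 := by rw [hb, Nat.zero_mul]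
        subst hb0
        have he : iv k 0 0 = (∅ : Finset (Fin k)) := by
          ext x; simp [mem_iv]
        rw [he, Finset.sup_empty, cmi_bot]
        simp
      | succ m ih =>
        intro b hb hba
        have hb' : b = m * r + r := by rw [hb]; ring
        have hsplit : (iv k 0 b).sup W
            = (iv k 0 (m * r)).sup W ⊔ (iv k (m * r) b).sup W := by
          rw [← Finset.sup_union, iv_union (Nat.zero_le _) (by omega)]
        rw [hsplit, cmi_sup_right]
        have hiD : i ∉ iv k (m * r) b := not_mem_iv (Or.inl (by omega))
        have hiS : i ∉ iv k 0 (m * r) := not_mem_iv (Or.inl (by omega))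
        have hstep : cmi F (W i) ((iv k (m * r) b).sup W)
            ((iv k 0 (m * r)).sup W ⊔ R.sup W)
            = cmi F (W i) ((iv k (m * r) b).sup W) (R.sup W) := by
          exact hL3 i _ _ _ hiD hiS hiR (iv_disjoint (by omega)).symm
            (hR ▸ iv_disjoint (by omega)) (hR ▸ iv_disjoint (by omega)) hcardR
        rw [hstep]
        have hcardD : (iv k (m * r) b).card = r := by
          rw [card_iv k _ _ (by omega)]; omega
        have h4 := hL4 i _ _ hiD hiR (hR ▸ iv_disjoint (by omega)) hcardD hcardR
        have h5 := ih (m * r) rfl (by omega)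
        push_cast
        linarith
    -- final assembly
    have hAsplit : (iv k 0 v).sup W
        = ((iv k 0 a1).sup W ⊔ (iv k a2 v).sup W) ⊔ R.sup W := by
      have h : iv k 0 v = (iv k 0 a1 ∪ iv k a2 v) ∪ R := by
        ext x; simp only [Finset.mem_union, mem_iv, hR]; omega
      rw [h, Finset.sup_union, Finset.sup_union]
    rw [hAsplit, mi_sup_eq, cmi_sup_right]
    have hmiR : mi F (W i) (R.sup W) = 0 := hL2 i R hiR (by rw [hcardR]; omega)
    have hterm1 : cmi F (W i) ((iv k 0 a1).sup W) (R.sup W)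
        ≤ (r : ℤ) * ((j' : ℤ) + 1) := by
      have := claim (j' + 1) a1 ha1.symm le_rfl
      push_cast at this ⊢
      linarith
    have hiC : i ∉ iv k a2 v := not_mem_iv (Or.inl (by omega))
    have hiA : i ∉ iv k 0 a1 := not_mem_iv (Or.inl (by omega))
    have hterm2 : cmi F (W i) ((iv k a2 v).sup W)
        ((iv k 0 a1).sup W ⊔ R.sup W) = 0 := by
      rw [hL3 i _ _ _ hiC hiA hiR (iv_disjoint (by omega)).symm
        (hR ▸ (iv_disjoint (by omega)).symm) (hR ▸ iv_disjoint (by omega)) hcardR]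
      have h4 := mi_sup_eq (W i) ((iv k a2 v).sup W) (R.sup W)
      have h5 : mi F (W i) ((iv k a2 v).sup W ⊔ R.sup W) = 0 := by
        have hun : (iv k a2 v).sup W ⊔ R.sup W = (iv k a1 v).sup W := by
          rw [hR, ← Finset.sup_union]
          congr 1
          ext x; simp only [Finset.mem_union, mem_iv]; omega
        rw [hun]
        exact hL2 i _ (not_mem_iv (Or.inl (by omega)))
          (by rw [card_iv k _ _ hv.le]; omega)
      rw [hmiR] at h4
      linarith
    rw [hmiR, hterm2]
    have hcast : ((v / r : ℕ) : ℤ) = (j' : ℤ) + 2 := by rw [hj']; push_cast; ring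
    rw [hcast]
    linarith

end Key

/-- Theorem 3, abstract form; interior point with `d = n − r`
and per-node storage `α = n − 2r`: under modified (L2), (L3), (L4),
`2 · dim(Σ_{i=1}^k W_i) ≥ k(2(n − 2r) − (k − r)) + 2r(k − r)`. -/
theorem theorem3_interior_point_bound
    (F V : Type*) [Field F] [AddCommGroup V] [Module F V] [FiniteDimensional F V]
    (n r k : ℕ) (hn : 0 < n) (hr : 0 < r) (hk : 0 < k)
    (hrk : r ∣ k) (hkn : k ≤ n - r) (h2rn : 2 * r ≤ n)
    (α : ℕ) (hα : α = n - 2 * r)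
    (W : Fin k → Submodule F V)
    (hdim : ∀ i : Fin k, Module.finrank F (W i) = α)
    (hL2 : ∀ (i : Fin k) (S : Finset (Fin k)), i ∉ S → S.card ≤ 2 * r - 1 →
      mi F (W i) (S.sup W) = 0)
    (hL3 : ∀ (i : Fin k) (B₁ B₂ B₃ : Finset (Fin k)), i ∉ B₁ → i ∉ B₂ → i ∉ B₃ →
      Disjoint B₁ B₂ → Disjoint B₁ B₃ → Disjoint B₂ B₃ → B₃.card = r →
      cmi F (W i) (B₁.sup W) (B₂.sup W ⊔ B₃.sup W)
        = cmi F (W i) (B₁.sup W) (B₃.sup W))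
    (hL4 : ∀ (i : Fin k) (S S' : Finset (Fin k)), i ∉ S → i ∉ S' → Disjoint S S' →
      S.card = r → S'.card = r → cmi F (W i) (S.sup W) (S'.sup W) ≤ (r : ℤ)) :
    2 * (Module.finrank F ((Finset.univ : Finset (Fin k)).sup W : Submodule F V) : ℤ)
      ≥ (k : ℤ) * (2 * ((n : ℤ) - 2 * r) - ((k : ℤ) - r)) + 2 * r * ((k : ℤ) - r) := by
  obtain ⟨q, hq⟩ := hrk
  -- main chain induction
  have main : ∀ a, a ≤ k → ((a : ℤ) * α - ∑ v ∈ Finset.range a, cBound r v)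
      ≤ (Module.finrank F ((iv k 0 a).sup W : Submodule F V) : ℤ) := by
    intro a
    induction a with
    | zero =>
      intro _
      have he : iv k 0 0 = (∅ : Finset (Fin k)) := by ext x; simp [mem_iv]
      rw [he, Finset.sup_empty]
      simp
    | succ a ih =>
      intro ha
      have hak : a < k := ha
      have hkey := key_bound r k hr W hL2 hL3 hL4 a hak
      have hiv : (iv k 0 (a + 1)).sup W = W ⟨a, hak⟩ ⊔ (iv k 0 a).sup W := by
        have hins : iv k 0 (a + 1) = insert ⟨a, hak⟩ (iv k 0 a) := by
          ext x; simp only [mem_iv, Finset.mem_insert, Fin.ext_iff]; omega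
        rw [hins, Finset.sup_insert]
      have hmi : mi F (W ⟨a, hak⟩) ((iv k 0 a).sup W)
          = (α : ℤ) + (Module.finrank F ((iv k 0 a).sup W : Submodule F V) : ℤ)
            - (Module.finrank F ((iv k 0 (a + 1)).sup W : Submodule F V) : ℤ) := by
        rw [hiv]; unfold mi; rw [hdim]
      have hih := ih hak.le
      rw [Finset.sum_range_succ]
      push_cast
      linarith
  -- summation bound
  have hsum : ∀ Q : ℕ, 1 ≤ Q → 2 * ∑ v ∈ Finset.range (r * Q), cBound r v
      ≤ (r : ℤ) ^ 2 * ((Q : ℤ) - 1) * ((Q : ℤ) - 2) := by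
    intro Q
    induction Q with
    | zero => omega
    | succ Q ih =>
      intro _
      by_cases hQ : Q = 0
      · subst hQ
        have hz : ∀ v ∈ Finset.range (r * 1), cBound r v = 0 := by
          intro v hv
          rw [Finset.mem_range, Nat.mul_one] at hv
          have hd0 : v / r = 0 := Nat.div_eq_of_lt hv
          rw [cBound, if_pos (by omega)]
        rw [Finset.sum_eq_zero hz]
        norm_num
      · have hQ1 : 1 ≤ Q := Nat.one_le_iff_ne_zero.mpr hQ
        have hm : r * (Q + 1) = r * Q + r := by ring
        rw [hm, Finset.range_eq_Ico,
          ← Finset.sum_Ico_consecutive _ (Nat.zero_le (r * Q)) (Nat.le_add_right _ r)]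
        have hconst : ∀ v ∈ Finset.Ico (r * Q) (r * Q + r),
            cBound r v ≤ (r : ℤ) * ((Q : ℤ) - 1) := by
          intro v hv
          rw [Finset.mem_Ico] at hv
          have hdiv : v / r = Q := by
            apply Nat.div_eq_of_lt_le (by rw [mul_comm]; omega)
            rw [add_mul, one_mul, mul_comm]; omega
          rw [cBound]
          by_cases hQle : Q ≤ 1
          · rw [if_pos (by rw [hdiv]; omega)]
            have : (1 : ℤ) ≤ Q := by exact_mod_cast hQ1
            nlinarith [show (0:ℤ) ≤ (r:ℤ) from by positivity]
          · rw [if_neg (by rw [hdiv]; omega), hdiv]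
        have hS2 : ∑ v ∈ Finset.Ico (r * Q) (r * Q + r), cBound r v
            ≤ (r : ℤ) * ((r : ℤ) * ((Q : ℤ) - 1)) := by
          calc ∑ v ∈ Finset.Ico (r * Q) (r * Q + r), cBound r v
              ≤ ∑ _v ∈ Finset.Ico (r * Q) (r * Q + r), (r : ℤ) * ((Q : ℤ) - 1) :=
                Finset.sum_le_sum hconst
            _ = (r : ℤ) * ((r : ℤ) * ((Q : ℤ) - 1)) := by
                rw [Finset.sum_const, Nat.card_Ico]
                have hc : r * Q + r - r * Q = r := by omega
                rw [hc, nsmul_eq_mul]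
        have hih := ih hQ1
        rw [Finset.range_eq_Ico] at hih
        have hring : (r : ℤ) ^ 2 * ((Q : ℤ) - 1) * ((Q : ℤ) - 2)
              + 2 * ((r : ℤ) * ((r : ℤ) * ((Q : ℤ) - 1)))
            = (r : ℤ) ^ 2 * (((Q : ℤ) + 1) - 1) * (((Q : ℤ) + 1) - 2) := by ring
        push_cast
        linarith
  -- conclusion
  have hq1 : 1 ≤ q := by
    rcases Nat.eq_zero_or_pos q with h | h
    · subst h; omega
    · exact h
  have huniv : iv k 0 k = (Finset.univ : Finset (Fin k)) := by
    ext x; simp [mem_iv, x.isLt]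
  have h1 := main k le_rfl
  rw [huniv] at h1
  have h2 := hsum q hq1
  rw [← hq] at h2
  have hαz : (α : ℤ) = (n : ℤ) - 2 * (r : ℤ) := by
    subst hα; push_cast [Nat.cast_sub h2rn]; ring
  have hkz : (k : ℤ) = (r : ℤ) * (q : ℤ) := by rw [hq]; push_cast; ring
  have hid : (k : ℤ) * (2 * ((n : ℤ) - 2 * r) - ((k : ℤ) - r)) + 2 * r * ((k : ℤ) - r)
      = 2 * (k : ℤ) * (α : ℤ) - (r : ℤ) ^ 2 * ((q : ℤ) - 1) * ((q : ℤ) - 2) := by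
    rw [hαz, hkz]; ring
  rw [ge_iff_le, hid]
  linarith
end
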